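/- (Lemma 2.1(vii)) Given two admissible 1D primitive states U⁻ and U⁺ with the HLLC wave speeds s⁻ = min(s_min(U⁻), s_min(U⁺)) and s⁺ = max(s_max(U⁻), s_max(U⁺)), one has (A⁻)² - (B⁻)² - (D⁻)²(s⁻ - u⁻)² > 0 and (A⁺)² - (B⁺)² - (D⁺)²(s⁺ - u⁺)² > 0. -/

import Mathlib

set_option maxHeartbeats 1000000


noncomputable section

namespace SRHD1D

/-- Lorentz factor `γ = (1 - u²)^(-1/2)`. -/
def lorentz (u : ℝ) : ℝ := 1 / Real.sqrt (1 - u ^ 2)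

/-- Specific enthalpy `h = 1 + Γ p / ((Γ - 1) ρ)` of a perfect gas. -/
def enthalpy (G r p : ℝ) : ℝ := 1 + G * p / ((G - 1) * r)

/-- Sound speed `c_s = √(Γ p / (ρ h))`. -/
def soundSpeed (G r p : ℝ) : ℝ := Real.sqrt (G * p / (r * enthalpy G r p))

/-- Conserved rest-mass density `D = ρ γ`. -/
def Dc (r u : ℝ) : ℝ := r * lorentz u

/-- Conserved momentum `m = ρ h γ² u`. -/
def mc (G r u p : ℝ) : ℝ := r * enthalpy G r p * lorentz u ^ 2 * u

/-- Conserved total energy `E = ρ h γ² - p`. -/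
def Ec (G r u p : ℝ) : ℝ := r * enthalpy G r p * lorentz u ^ 2 - p

/-- Minimum characteristic speed `s_min = (u - c_s)/(1 - c_s u)`. -/
def sMin (G r u p : ℝ) : ℝ := (u - soundSpeed G r p) / (1 - soundSpeed G r p * u)

/-- Maximum characteristic speed `s_max = (u + c_s)/(1 + c_s u)`. -/
def sMax (G r u p : ℝ) : ℝ := (u + soundSpeed G r p) / (1 + soundSpeed G r p * u)

/-- convex quadratic positivity -/
lemma quad_pos (C p2 u s s0 : ℝ) (hC : 0 < C + p2)
    (h0 : 0 < C*(s0-u)^2 - p2*(1-s0^2)) (hup : 0 < p2*(1-u^2))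
    (hss0 : s ≤ s0) (hs0u : s0 < u) :
    0 < C*(s-u)^2 - p2*(1-s^2) := by
  have hus : (0:ℝ) < u - s := by linarith
  have h1 : (0:ℝ) < u - s0 := by linarith
  have key : (u - s0) * (C*(s-u)^2 - p2*(1-s^2)) =
      (u - s) * (C*(s0-u)^2 - p2*(1-s0^2)) + (s0 - s) * (p2*(1-u^2))
      + (C+p2)*(u-s0)*(s0-s)*(u-s) := by ring
  have t1 : 0 < (u-s)*(C*(s0-u)^2 - p2*(1-s0^2)) := mul_pos hus h0
  have t2 : 0 ≤ (s0-s)*(p2*(1-u^2)) := mul_nonneg (by linarith) hup.le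
  have t3 : 0 ≤ (C+p2)*(u-s0)*(s0-s)*(u-s) :=
    mul_nonneg (mul_nonneg (mul_nonneg hC.le h1.le) (by linarith)) hus.le
  have hpos : 0 < (u - s0) * (C*(s-u)^2 - p2*(1-s^2)) := by rw [key]; linarith
  nlinarith [hpos, h1]

lemma state_pos (G r u p s : ℝ) (hG1 : 1 < G) (hG2 : G ≤ 2)
    (hr : 0 < r) (hu : |u| < 1) (hp : 0 < p)
    (hs2 : s ≤ sMin G r u p) :
    0 < (s * Ec G r u p - mc G r u p)^2 - (mc G r u p * (s - u) - p)^2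
        - Dc r u ^ 2 * (s - u)^2 := by
  obtain ⟨hu1, hu2⟩ := abs_lt.mp hu
  have huu : 0 < 1 - u^2 := by nlinarith
  have hG0 : 0 < G - 1 := by linarith
  set h := enthalpy G r p with hhdef
  set c := soundSpeed G r p with hcdef
  set g2 := lorentz u ^ 2 with hg2def
  have hh1 : 1 < h := by
    rw [hhdef, enthalpy]
    have : 0 < G * p / ((G - 1) * r) := by positivity
    linarith
  have hrh1 : (G - 1) * r * (h - 1) = G * p := by
    rw [hhdef, enthalpy]; field_simp; ring
  have hrh0 : 0 < r * h := by positivity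
  have hc2' : c^2 * (r * h) = G * p := by
    have hc2 : c^2 = G * p / (r * h) := by
      rw [hcdef, soundSpeed, ← hhdef, sq]
      exact Real.mul_self_sqrt (by positivity)
    rw [hc2]; field_simp
  have hc0 : 0 < c := by
    rw [hcdef, soundSpeed, ← hhdef]; positivity
  have hg2 : g2 * (1 - u^2) = 1 := by
    rw [hg2def, lorentz, div_pow, one_pow, Real.sq_sqrt huu.le]
    field_simp
  have hDc : Dc r u ^ 2 = r^2 * g2 := by rw [Dc, mul_pow, hg2def]
  have hmc : mc G r u p = r * h * g2 * u := rfl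
  have hEc : Ec G r u p = r * h * g2 - p := rfl
  rw [sMin, ← hcdef] at hs2
  rw [hDc, hmc, hEc]
  clear_value h c g2
  clear hhdef hcdef hg2def
  -- now pure algebra
  have hrhgp : 0 < r * h - G * p := by
    have e : (G-1)*(r*h - G*p) = (G-1)*r*((2-G)*h + (G-1)) := by
      linear_combination (G-1)*hrh1
    have e2 : 0 < (2-G)*h + (G-1) := by nlinarith
    nlinarith [mul_pos (mul_pos hG0 hr) e2]
  have hcc : c^2 < 1 := by nlinarith [hc2']
  have hc1 : c < 1 := by nlinarith [hc0, hcc]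
  have hv : 0 < 1 - c * u := by nlinarith
  have hg2pos : 0 < g2 := by nlinarith
  have hg2' : g2 = 1/(1-u^2) := by
    field_simp
    linarith [hg2]
  have keyC : (G-1)*(r^2*h^2 - 2*r*h*p - r^2) = r*p*((2-G)*h + G) := by
    linear_combination (r*(h+1)) * hrh1
  have hC'pos : 0 < r^2*h^2 - 2*r*h*p - r^2 := by
    have e1 : 0 < (2-G)*h + G := by nlinarith
    have e2 : 0 < r*p*((2-G)*h + G) := by positivity
    have e3 : 0 < (G-1) * (r^2*h^2 - 2*r*h*p - r^2) := keyC ▸ e2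
    have e4 := div_pos e3 hG0
    rwa [mul_comm, mul_div_assoc, div_self (ne_of_gt hG0), mul_one] at e4
  set C' := r^2*h^2 - 2*r*h*p - r^2 with hC'def
  set C := g2 * C' with hCdef
  have hCpos : 0 < C := mul_pos hg2pos hC'pos
  have key : (s * (r * h * g2 - p) - r * h * g2 * u)^2 - (r * h * g2 * u * (s - u) - p)^2
      - r^2 * g2 * (s - u)^2 = C*(s-u)^2 - p^2*(1-s^2) := by
    rw [hCdef, hC'def]
    linear_combination (g2 * r^2 * h^2 * (s-u)^2) * hg2
  rw [key]
  set s0 : ℝ := (u - c)/(1 - c*u) with hs0def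
  have hs0u : s0 < u := by
    rw [hs0def, div_lt_iff₀ hv]
    nlinarith [mul_pos hc0 huu]
  have hM : 0 < C'*c^2 - p^2*(1-c^2) := by
    rw [hC'def]
    nlinarith [hc2', keyC, mul_pos hr hp, mul_pos (mul_pos hr hp) hp, sq_nonneg p]
  have h0 : 0 < C*(s0-u)^2 - p^2*(1-s0^2) := by
    have e1 : s0 - u = -(c*(1-u^2))/(1-c*u) := by
      have hne2 : (1:ℝ)-c*u ≠ 0 := ne_of_gt hv
      rw [hs0def, eq_div_iff hne2, sub_mul, div_mul_cancel₀ _ hne2]; ring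
    have e2 : 1 - s0^2 = (1-c^2)*(1-u^2)/(1-c*u)^2 := by
      have hne2 : (1:ℝ)-c*u ≠ 0 := ne_of_gt hv
      rw [hs0def, div_pow, eq_div_iff (pow_ne_zero 2 hne2), sub_mul, div_mul_cancel₀ _ (pow_ne_zero 2 hne2)]; ring
    have e3 : C*(s0-u)^2 - p^2*(1-s0^2) = (1-u^2)/(1-c*u)^2 * (C'*c^2 - p^2*(1-c^2)) := by
      rw [e1, e2, hCdef, hg2']
      have hne1 : (1:ℝ)-u^2 ≠ 0 := ne_of_gt huu
      have hne2 : (1:ℝ)-c*u ≠ 0 := ne_of_gt hv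
      field_simp
    rw [e3]
    exact mul_pos (by positivity) hM
  exact quad_pos C (p^2) u s s0 (by positivity) h0 (by positivity) hs2 hs0u

lemma state_pos_max (G r u p s : ℝ) (hG1 : 1 < G) (hG2 : G ≤ 2)
    (hr : 0 < r) (hu : |u| < 1) (hp : 0 < p)
    (hs2 : sMax G r u p ≤ s) :
    0 < (s * Ec G r u p - mc G r u p)^2 - (mc G r u p * (s - u) - p)^2
        - Dc r u ^ 2 * (s - u)^2 := by
  have hlor : lorentz (-u) = lorentz u := by rw [lorentz, lorentz, neg_sq]
  have hmin : sMin G r (-u) p = -sMax G r u p := by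
    rw [sMin, sMax]; ring
  have hs2' : -s ≤ sMin G r (-u) p := by rw [hmin]; linarith
  have H := state_pos G r (-u) p (-s) hG1 hG2 hr (by rwa [abs_neg]) hp hs2'
  have hmceq : mc G r (-u) p = -mc G r u p := by rw [mc, mc, hlor]; ring
  have hEceq : Ec G r (-u) p = Ec G r u p := by rw [Ec, Ec, hlor]
  have hDceq : Dc r (-u) = Dc r u := by rw [Dc, Dc, hlor]
  rw [hmceq, hEceq, hDceq] at H
  exact lt_of_lt_of_eq H (by ring)

theorem hllc_K_pos (G r1 u1 p1 r2 u2 p2 sm sp A1 A2 B1 B2 : ℝ)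
    (hG1 : 1 < G) (hG2 : G ≤ 2)
    (hr1 : 0 < r1) (hu1 : |u1| < 1) (hp1 : 0 < p1)
    (hr2 : 0 < r2) (hu2 : |u2| < 1) (hp2 : 0 < p2)
    (hsm : sm = min (sMin G r1 u1 p1) (sMin G r2 u2 p2))
    (hsp : sp = max (sMax G r1 u1 p1) (sMax G r2 u2 p2))
    (hA1 : A1 = sm * Ec G r1 u1 p1 - mc G r1 u1 p1)
    (hA2 : A2 = sp * Ec G r2 u2 p2 - mc G r2 u2 p2)
    (hB1 : B1 = mc G r1 u1 p1 * (sm - u1) - p1)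
    (hB2 : B2 = mc G r2 u2 p2 * (sp - u2) - p2)
    :
    0 < A1 ^ 2 - B1 ^ 2 - Dc r1 u1 ^ 2 * (sm - u1) ^ 2 ∧ 0 < A2 ^ 2 - B2 ^ 2 - Dc r2 u2 ^ 2 * (sp - u2) ^ 2 := by
  constructor
  · rw [hA1, hB1]
    exact state_pos G r1 u1 p1 sm hG1 hG2 hr1 hu1 hp1
      (hsm ▸ min_le_left _ _)
  · rw [hA2, hB2]
    exact state_pos_max G r2 u2 p2 sp hG1 hG2 hr2 hu2 hp2
      (hsp ▸ le_max_right _ _)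


end SRHD1D
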